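/- If there exists a resilient supervisor S^R for the attacked closed-loop system G^R with respect to Σ_{c,v} and G_robust, then the attacked system Sa/Ga is AE-robust recoverable with respect to G_robust, i.e., every detection state x_d ∈ X_det admits a robust-recovery strategy leading to G_robust. -/

import Mathlib

/-!
Common formalization of supervisory control of DES under actuator-enablement
attacks, following the natural-language context.

* A plant is a DFA with partial transition function `f : X → E → Option X`
  and initial state `x0`; `runFrom` extends `f` to strings; `Lang f x0` is the
  generated language.
* A strict subautomaton of an automaton is represented by its state set
  `Q : Set X`, with induced transition function `subStep f Q`.
* Attacked events are modelled by the alphabet `E ⊕ E`: `Sum.inl e` is the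
  ordinary event `e`, `Sum.inr e` is the attacked copy `eᵃ` (meaningful for
  `e ∈ Scv`).
* The attacked plant `gaStep`, attacked supervisor `saStep` (state `none`
  playing the role of the fresh state `A`), and their synchronous composition
  `grStep` (the attacked closed-loop system `G^R = Sa ∥ Ga`) are defined below,
  together with detection states, robust-recovery, the resilient specification
  `Ha`, supervisors for `G^R`, and resilience.
-/

open Classical List

namespace RobustRec

variable {X : Type*} {E : Type*}

/-- Extension of a partial transition function to strings. -/
def runFrom (f : X → E → Option X) : X → List E → Option X
  | x, [] => some x
  | x, e :: w => (f x e).bind fun y => runFrom f y w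

/-- Language generated from state `x0`. -/
def Lang (f : X → E → Option X) (x0 : X) : Set (List E) :=
  {w | (runFrom f x0 w).isSome}

/-- Transition function of the strict (induced) subautomaton with state set `Q`:
a transition is defined iff it is defined in the big automaton and both its
endpoints lie in `Q`. -/
noncomputable def subStep (f : X → E → Option X) (Q : Set X) : X → E → Option X :=
  fun x e => (f x e).bind fun y => if x ∈ Q ∧ y ∈ Q then some y else none

/-- Vulnerable states: those where some vulnerable controllable event is feasible. -/
def vulnStates (f : X → E → Option X) (Scv : Set E) : Set X :=
  {x | ∃ e ∈ Scv, (f x e).isSome}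

/-- A supervisor for the plant `(f, x0)`, represented by its state set `XS`
(the induced strict subautomaton): it contains `x0`, is controllable w.r.t.
the uncontrollable events `Suc`, and is safe w.r.t. the unsafe states `XUS`. -/
structure IsSupervisor (f : X → E → Option X) (x0 : X) (Suc : Set E)
    (XUS : Set X) (XS : Set X) : Prop where
  init_mem : x0 ∈ XS
  controllable : ∀ x ∈ XS, ∀ e ∈ Suc, ∀ y, f x e = some y → y ∈ XS
  safe : ∀ x ∈ XS, x ∉ XUS

/-- The attacked plant `Ga`: all transitions of `G`, plus, for every transition
on a vulnerable event `σ ∈ Scv`, a parallel transition on its attacked copy. -/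
noncomputable def gaStep (f : X → E → Option X) (Scv : Set E) :
    X → E ⊕ E → Option X
  | x, Sum.inl e => f x e
  | x, Sum.inr e => if e ∈ Scv then f x e else none

/-- The attacked supervisor `Sa`: states are `some x` for states `x` of `S`
plus the fresh state `A = none` with a self-loop on every event; for every
state `x` of `S` and `σ ∈ Scv` with `f_S(x,σ)` undefined there is a transition
on `σᵃ` from `x` to `A`. -/
noncomputable def saStep (f : X → E → Option X) (XS : Set X) (Scv : Set E) :
    Option X → E ⊕ E → Option (Option X)
  | none, _ => some none
  | some x, Sum.inl e => (subStep f XS x e).map some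
  | some x, Sum.inr e =>
      if e ∈ Scv ∧ x ∈ XS ∧ subStep f XS x e = none then some none else none

/-- Synchronous composition of two automata over a common alphabet. -/
def prodStep {X1 X2 A : Type*} (f1 : X1 → A → Option X1) (f2 : X2 → A → Option X2) :
    X1 × X2 → A → Option (X1 × X2) :=
  fun p a => (f1 p.1 a).bind fun y1 => (f2 p.2 a).map fun y2 => (y1, y2)

/-- The attacked closed-loop system `G^R = Sa ∥ Ga`. Its post-attack states are
those of the form `(none, x)`, i.e. `(A, x)`. -/
noncomputable def grStep (f : X → E → Option X) (XS : Set X) (Scv : Set E) :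
    Option X × X → E ⊕ E → Option (Option X × X) :=
  prodStep (saStep f XS Scv) (gaStep f Scv)

/-- Initial state of `G^R`. -/
def grInit (x0 : X) : Option X × X := (some x0, x0)

/-- Embedding of strings over `Σ` into strings over `Σ ∪ Σᵃ_{c,v}`. -/
def embed : List E → List (E ⊕ E) := List.map Sum.inl

/-- The language `L(Sa/Ga)` of the attacked closed-loop system. -/
noncomputable def GRLang (f : X → E → Option X) (x0 : X) (XS : Set X) (Scv : Set E) :
    Set (List (E ⊕ E)) :=
  Lang (grStep f XS Scv) (grInit x0)

/-- The detection language `L_det = {sσ ∈ L(G) | s ∈ L(S/G), σ ∈ Σ_{c,v},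
sσᵃ ∈ L(Sa/Ga)}`. -/
noncomputable def detLang (f : X → E → Option X) (x0 : X) (XS : Set X) (Scv : Set E) :
    Set (List E) :=
  {w | ∃ s σ, w = s ++ [σ] ∧ σ ∈ Scv ∧ w ∈ Lang f x0 ∧
        s ∈ Lang (subStep f XS) x0 ∧ embed s ++ [Sum.inr σ] ∈ GRLang f x0 XS Scv}

/-- The detection states `X_det = {f(x0, sσ) : sσ ∈ L_det}`. -/
noncomputable def detStates (f : X → E → Option X) (x0 : X) (XS : Set X) (Scv : Set E) :
    Set X :=
  {x | ∃ w ∈ detLang f x0 XS Scv, runFrom f x0 w = some x}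

/-- `r` is a robust-recovery strategy from `x` relative to the candidate set `R`
of recoverable states, the robust region `XR` and the bad states
`Bad = X_v ∪ X_US`: (1) `r` leads into `XR`; (2) no prefix of `r` visits `Bad`;
(3) no prefix of `r` can uncontrollably reach `Bad`; (4) any one-step
uncontrollable deviation from `r` lands in `R`. -/
def IsRecoveryPath (f : X → E → Option X) (Suc : Set E) (XR Bad : Set X)
    (R : Set X) (x : X) (r : List E) : Prop :=
  (∃ y ∈ XR, runFrom f x r = some y) ∧
  (∀ t, t <+: r → ∀ y, runFrom f x t = some y → y ∉ Bad) ∧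
  (∀ t, t <+: r → ∀ u : List E, (∀ e ∈ u, e ∈ Suc) →
      ∀ y, runFrom f x (t ++ u) = some y → y ∉ Bad) ∧
  (∀ t, t <+: r → ∀ e ∈ Suc, ∀ y, runFrom f x (t ++ [e]) = some y →
      ¬ (t ++ [e]) <+: r → y ∈ R)

/-- The set `R` of AE-robust recoverable states: the largest subset of
`X \ Bad` each of whose elements admits a robust-recovery strategy (relative
to the set itself). -/
def recSet (f : X → E → Option X) (Suc : Set E) (XR Bad : Set X) : Set X :=
  ⋃₀ {R | R ⊆ Badᶜ ∧ ∀ x ∈ R, ∃ r, IsRecoveryPath f Suc XR Bad R x r}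

/-- The attacked system `Sa/Ga` is AE-robust recoverable w.r.t. the robust
region `XR` if every detection state is AE-robust recoverable. -/
noncomputable def AERobustRecoverable (f : X → E → Option X) (x0 : X)
    (Suc Scv : Set E) (XUS XS XR : Set X) : Prop :=
  detStates f x0 XS Scv ⊆ recSet f Suc XR (vulnStates f Scv ∪ XUS)

/-- Reachable states of `G^R` (the state set of the synchronous composition). -/
noncomputable def grStates (f : X → E → Option X) (x0 : X) (XS : Set X) (Scv : Set E) :
    Set (Option X × X) :=
  {p | ∃ w, runFrom (grStep f XS Scv) (grInit x0) w = some p}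

/-- A supervisor for `G^R`, represented by its state set `Q` (inducing a strict
subautomaton of `G^R`): it contains the initial state and is controllable
w.r.t. `Suc` (attacked events being controllable). -/
structure IsGRSupervisor (f : X → E → Option X) (x0 : X) (Suc Scv : Set E)
    (XS : Set X) (Q : Set (Option X × X)) : Prop where
  subset : Q ⊆ grStates f x0 XS Scv
  init_mem : grInit x0 ∈ Q
  controllable : ∀ p ∈ Q, ∀ e ∈ Suc, ∀ q, grStep f XS Scv p (Sum.inl e) = some q → q ∈ Q

/-- State set of the resilient specification `Ha`: `G^R` minus every post-attack
state `(A, x)` with `x ∈ X_v ∪ X_US`. -/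
def haCarrier (f : X → E → Option X) (Scv : Set E) (XUS : Set X) :
    Set (Option X × X) :=
  {p | ¬ (p.1 = none ∧ p.2 ∈ vulnStates f Scv ∪ XUS)}

/-- Marked states of `Ha`: post-attack states `(A, x)` with `x` in the robust
region. -/
def haMarked (XR : Set X) : Set (Option X × X) :=
  {p | p.1 = (none : Option X) ∧ p.2 ∈ XR}

/-- The closed-loop language `L(S^R/G^R) = L(S^R)` of a supervisor `Q` for `G^R`. -/
noncomputable def SRLang (f : X → E → Option X) (x0 : X) (XS : Set X) (Scv : Set E)
    (Q : Set (Option X × X)) : Set (List (E ⊕ E)) :=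
  Lang (subStep (grStep f XS Scv) Q) (grInit x0)

/-- `S^R` is safe w.r.t. the resilient specification `Ha`: `L(S^R) ⊆ L(Ha)`. -/
noncomputable def SafeWrtHa (f : X → E → Option X) (x0 : X) (XS : Set X)
    (Scv : Set E) (XUS : Set X) (Q : Set (Option X × X)) : Prop :=
  SRLang f x0 XS Scv Q ⊆
    Lang (subStep (grStep f XS Scv) (haCarrier f Scv XUS)) (grInit x0)

/-- `S^R` is nonblocking: from every post-attack state of `S^R`, a marked state
of `Ha` is reachable within `S^R`. -/
noncomputable def NonblockingSR (f : X → E → Option X) (XS : Set X) (Scv : Set E)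
    (XR : Set X) (Q : Set (Option X × X)) : Prop :=
  ∀ p ∈ Q, p.1 = (none : Option X) →
    ∃ w q, runFrom (subStep (grStep f XS Scv) Q) p w = some q ∧ q ∈ haMarked XR

/-- `S^R` is maximally permissive among safe nonblocking supervisors for `G^R`. -/
noncomputable def MaxPermissive (f : X → E → Option X) (x0 : X) (Suc Scv : Set E)
    (XS XUS XR : Set X) (Q : Set (Option X × X)) : Prop :=
  ∀ Q', IsGRSupervisor f x0 Suc Scv XS Q' → SafeWrtHa f x0 XS Scv XUS Q' →
    NonblockingSR f XS Scv XR Q' → SRLang f x0 XS Scv Q' ⊆ SRLang f x0 XS Scv Q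

/-- `S^R` (given by its state set `Q`) is resilient w.r.t. `Scv` and the robust
region `XR`: it permits the full nominal behavior `L(S/G)`, and after any
AE-attack `sσᵃ` feasible in `L(Sa/Ga)` it permits the attack, keeps all its
subsequent behavior out of `Bad = X_v ∪ X_US`, and can always be extended
within `L(S^R)` to reach a post-attack state `(A, x)` with `x ∈ XR`; i.e. it
enforces a robust-recovery strategy from the detection state. -/
noncomputable def ResilientSup (f : X → E → Option X) (x0 : X) (Scv : Set E)
    (XS XR Bad : Set X) (Q : Set (Option X × X)) : Prop :=
  (∀ s ∈ Lang (subStep f XS) x0, embed s ∈ SRLang f x0 XS Scv Q) ∧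
  ∀ s : List E, embed s ∈ SRLang f x0 XS Scv Q →
    ∀ σ ∈ Scv, embed s ++ [Sum.inr σ] ∈ GRLang f x0 XS Scv →
      embed s ++ [Sum.inr σ] ∈ SRLang f x0 XS Scv Q ∧
      ∀ t : List E, embed s ++ [Sum.inr σ] ++ embed t ∈ SRLang f x0 XS Scv Q →
        (∀ t', t' <+: t → ∀ y, runFrom f x0 (s ++ σ :: t') = some y →
            y ∉ Bad) ∧
        ∃ u q, runFrom (subStep (grStep f XS Scv) Q) (grInit x0)
                 (embed s ++ [Sum.inr σ] ++ embed t ++ u) = some q ∧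
               q.1 = (none : Option X) ∧ q.2 ∈ XR

/-- A prefix-closed language. -/
def PrefixClosed (K : Set (List E)) : Prop := ∀ s t : List E, s ++ t ∈ K → s ∈ K

/-- `K` is controllable w.r.t. the language `M` and uncontrollable events `Suc`. -/
def ControllableLang (K M : Set (List E)) (Suc : Set E) : Prop :=
  ∀ s ∈ K, ∀ e ∈ Suc, s ++ [e] ∈ M → s ++ [e] ∈ K

/-- The supremal controllable (prefix-closed) sublanguage of `M` w.r.t. `LG`. -/
def supC (M LG : Set (List E)) (Suc : Set E) : Set (List E) :=
  ⋃₀ {K | K ⊆ M ∧ PrefixClosed K ∧ ControllableLang K LG Suc}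

end RobustRec

namespace RobustRec

variable {X : Type*} {E : Type*}

theorem runFrom_append (f : X → E → Option X) (x : X) (a b : List E) :
    runFrom f x (a ++ b) = (runFrom f x a).bind fun y => runFrom f y b := by
  induction a generalizing x with
  | nil => simp [runFrom]
  | cons e a ih => simp only [List.cons_append, runFrom]; cases f x e <;> simp [ih]

theorem subStep_eq_some {f : X → E → Option X} {Q : Set X} {x y : X} {e : E} :
    subStep f Q x e = some y ↔ f x e = some y ∧ x ∈ Q ∧ y ∈ Q := by
  unfold subStep
  constructor
  · intro h
    cases hfe : f x e with
    | none => rw [hfe] at h; simp at h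
    | some z =>
        rw [hfe] at h
        simp only [Option.bind_some] at h
        split_ifs at h with hin
        · obtain rfl : z = y := Option.some.inj h
          exact ⟨rfl, hin⟩
  · rintro ⟨h1, h2, h3⟩
    rw [h1]
    simp [h2, h3]

theorem runFrom_subStep_le {f : X → E → Option X} {Q : Set X} {x y : X} {w : List E}
    (h : runFrom (subStep f Q) x w = some y) : runFrom f x w = some y := by
  induction w generalizing x with
  | nil => exact h
  | cons e w ih =>
      simp only [runFrom] at h ⊢
      cases hs : subStep f Q x e with
      | none => rw [hs] at h; simp at h
      | some z =>
          rw [hs] at h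
          rw [(subStep_eq_some.mp hs).1]
          exact ih h

theorem runFrom_subStep_mem {f : X → E → Option X} {Q : Set X} {x y : X} {w : List E}
    (hx : x ∈ Q) (h : runFrom (subStep f Q) x w = some y) : y ∈ Q := by
  induction w generalizing x with
  | nil => simp [runFrom] at h; exact h ▸ hx
  | cons e w ih =>
      simp only [runFrom] at h
      cases hs : subStep f Q x e with
      | none => rw [hs] at h; simp at h
      | some z => rw [hs] at h; exact ih (subStep_eq_some.mp hs).2.2 h

theorem runFrom_prefix {f : X → E → Option X} {x y : X} {a b : List E}
    (h : runFrom f x (a ++ b) = some y) : ∃ m, runFrom f x a = some m := by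
  rw [runFrom_append] at h
  cases hm : runFrom f x a with
  | none => rw [hm] at h; simp at h
  | some m => exact ⟨m, rfl⟩


theorem gaStep_inr_eq_some {f : X → E → Option X} {Scv : Set E} {x y : X} {e : E} :
    gaStep f Scv x (Sum.inr e) = some y ↔ e ∈ Scv ∧ f x e = some y := by
  simp only [gaStep]
  split_ifs with h <;> simp [h]

theorem saStep_none {f : X → E → Option X} {XS : Set X} {Scv : Set E} (ev : E ⊕ E) :
    saStep f XS Scv none ev = some none := by
  cases ev <;> rfl

theorem prodStep_eq_some {X1 X2 A : Type*} {f1 : X1 → A → Option X1}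
    {f2 : X2 → A → Option X2} {p q : X1 × X2} {a : A} :
    prodStep f1 f2 p a = some q ↔ f1 p.1 a = some q.1 ∧ f2 p.2 a = some q.2 := by
  unfold prodStep
  cases h1 : f1 p.1 a <;> cases h2 : f2 p.2 a <;>
    simp [Prod.ext_iff, eq_comm, and_comm]

theorem grStep_eq_some {f : X → E → Option X} {XS : Set X} {Scv : Set E}
    {p q : Option X × X} {ev : E ⊕ E} :
    grStep f XS Scv p ev = some q ↔
      saStep f XS Scv p.1 ev = some q.1 ∧ gaStep f Scv p.2 ev = some q.2 :=
  prodStep_eq_some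

theorem grRun_snd {f : X → E → Option X} {XS : Set X} {Scv : Set E}
    {p q : Option X × X} {w : List (E ⊕ E)}
    (h : runFrom (grStep f XS Scv) p w = some q) :
    runFrom f p.2 (w.map (Sum.elim id id)) = some q.2 := by
  induction w generalizing p with
  | nil =>
      simp only [runFrom] at h
      obtain rfl := Option.some.inj h
      simp [runFrom]
  | cons ev w ih =>
      simp only [runFrom, List.map_cons] at h ⊢
      cases hs : grStep f XS Scv p ev with
      | none => rw [hs] at h; simp at h
      | some m =>
          rw [hs] at h
          simp only [Option.bind_some] at h
          have h2 : gaStep f Scv p.2 ev = some m.2 := (grStep_eq_some.mp hs).2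
          have h3 : f p.2 (Sum.elim id id ev) = some m.2 := by
            cases ev with
            | inl e => exact h2
            | inr e => exact (gaStep_inr_eq_some.mp h2).2
          rw [h3]
          simpa using ih h

theorem grRun_fst_none {f : X → E → Option X} {XS : Set X} {Scv : Set E}
    {p q : Option X × X} {w : List (E ⊕ E)}
    (h : runFrom (grStep f XS Scv) p w = some q) (hp : p.1 = none) :
    q.1 = none := by
  induction w generalizing p with
  | nil =>
      simp only [runFrom] at h
      obtain rfl := Option.some.inj h
      exact hp
  | cons ev w ih =>
      simp only [runFrom] at h
      cases hs : grStep f XS Scv p ev with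
      | none => rw [hs] at h; simp at h
      | some m =>
          rw [hs] at h
          simp only [Option.bind_some] at h
          have h1 : saStep f XS Scv p.1 ev = some m.1 := (grStep_eq_some.mp hs).1
          rw [hp, saStep_none] at h1
          exact ih h (Option.some.inj h1).symm

theorem grStep_inr_fst {f : X → E → Option X} {XS : Set X} {Scv : Set E}
    {p q : Option X × X} {e : E}
    (h : grStep f XS Scv p (Sum.inr e) = some q) : q.1 = none := by
  have h1 : saStep f XS Scv p.1 (Sum.inr e) = some q.1 := (grStep_eq_some.mp h).1
  cases hp1 : p.1 with
  | none => rw [hp1, saStep_none] at h1; exact (Option.some.inj h1).symm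
  | some z =>
      rw [hp1] at h1
      simp only [saStep] at h1
      split_ifs at h1
      exact (Option.some.inj h1).symm

theorem grRun_after_inr {f : X → E → Option X} {XS : Set X} {Scv : Set E}
    {p q : Option X × X} {σ : E} {w : List (E ⊕ E)}
    (h : runFrom (grStep f XS Scv) p (Sum.inr σ :: w) = some q) : q.1 = none := by
  simp only [runFrom] at h
  cases hs : grStep f XS Scv p (Sum.inr σ) with
  | none => rw [hs] at h; simp at h
  | some m =>
      rw [hs] at h
      simp only [Option.bind_some] at h
      exact grRun_fst_none h (grStep_inr_fst hs)

end RobustRec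

/-- the "only if" direction of Theorem 2. If there exists a
resilient supervisor `S^R` for the attacked closed-loop system `G^R` w.r.t.
`Σ_{c,v}` and `G_robust`, then the attacked system `Sa/Ga` is AE-robust
recoverable w.r.t. `G_robust`, i.e. every detection state admits a
robust-recovery strategy leading to `G_robust`. -/
theorem RobustRec.AERobustRecoverable_of_exists_resilient
    {X E : Type*} [Fintype X] [Fintype E]
    (f : X → E → Option X) (x0 : X) (Sc Suc Scv : Set E) (XUS XS XR : Set X)
    (hdisj : Sc ∩ Suc = ∅) (hcover : Sc ∪ Suc = Set.univ) (hScv : Scv ⊆ Sc)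
    (hS : IsSupervisor f x0 Suc XUS XS)
    (hXR : XR ∩ (vulnStates f Scv ∪ XUS) = ∅)
    (hex : ∃ Q : Set (Option X × X), IsGRSupervisor f x0 Suc Scv XS Q ∧
        ResilientSup f x0 Scv XS XR (vulnStates f Scv ∪ XUS) Q) :
    AERobustRecoverable f x0 Suc Scv XUS XS XR := by
  classical
  obtain ⟨Q, hQ, hres⟩ := hex
  -- abbreviation for the step function of S^R
  set gr : Option X × X → E ⊕ E → Option (Option X × X) :=
    subStep (grStep f XS Scv) Q with hgr
  have memSR : ∀ w : List (E ⊕ E), (runFrom gr (grInit x0) w).isSome →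
      w ∈ SRLang f x0 XS Scv Q := fun _ h => h
  have memSR' : ∀ w : List (E ⊕ E), w ∈ SRLang f x0 XS Scv Q →
      (runFrom gr (grInit x0) w).isSome := fun _ h => h
  -- projection lemma
  have hproj : ∀ (s : List E) (σ : E) (c : List E),
      (embed s ++ [Sum.inr σ] ++ embed c).map (Sum.elim id id) = s ++ σ :: c := by
    intro s σ c
    simp [embed, List.map_map, Function.comp]
  -- composition lemma: reading off the plant run and post-attack shape
  have comp : ∀ (s : List E) (σ : E) (c : List E) (p : Option X × X),
      runFrom gr (grInit x0) (embed s ++ [Sum.inr σ] ++ embed c) = some p →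
      p ∈ Q ∧ p.1 = none ∧ runFrom f x0 (s ++ σ :: c) = some p.2 := by
    intro s σ c p hp
    have hQmem : p ∈ Q := runFrom_subStep_mem hQ.init_mem hp
    have hg' : runFrom (grStep f XS Scv) (grInit x0)
        (embed s ++ [Sum.inr σ] ++ embed c) = some p := runFrom_subStep_le hp
    have hfst : p.1 = none := by
      have hassoc : embed s ++ [Sum.inr σ] ++ embed c
          = embed s ++ (Sum.inr σ :: embed c) := by simp
      rw [hassoc, runFrom_append] at hg'
      cases hm : runFrom (grStep f XS Scv) (grInit x0) (embed s) with
      | none => rw [hm] at hg'; simp at hg'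
      | some m =>
          rw [hm] at hg'
          simp only [Option.bind_some] at hg'
          exact grRun_after_inr hg'
    have hsnd := grRun_snd hg'
    rw [hproj] at hsnd
    exact ⟨hQmem, hfst, hsnd⟩
  -- extension lemma along uncontrollable plant events, post attack
  have ext : ∀ (u : List E) (p : Option X × X) (y : X), p ∈ Q → p.1 = none →
      (∀ e ∈ u, e ∈ Suc) → runFrom f p.2 u = some y →
      runFrom gr p (embed u) = some (none, y) := by
    intro u
    induction u with
    | nil =>
        rintro ⟨p1, p2⟩ y _ hp1 _ hr
        simp only [runFrom] at hr
        obtain rfl := Option.some.inj hr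
        simp only at hp1
        subst hp1
        simp [embed, runFrom]
    | cons e u ih =>
        rintro ⟨p1, p2⟩ y hpQ hp1 hu hr
        simp only at hp1
        subst hp1
        simp only [runFrom] at hr
        cases hfe : f p2 e with
        | none => rw [hfe] at hr; simp at hr
        | some z =>
            rw [hfe] at hr
            simp only [Option.bind_some] at hr
            have hgr1 : grStep f XS Scv (none, p2) (Sum.inl e) = some (none, z) :=
              grStep_eq_some.mpr ⟨saStep_none _, hfe⟩
            have hzQ : (none, z) ∈ Q :=
              hQ.controllable _ hpQ e (hu e List.mem_cons_self) _ hgr1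
            have hsub : gr (none, p2) (Sum.inl e) = some (none, z) :=
              subStep_eq_some.mpr ⟨hgr1, hpQ, hzQ⟩
            have hrest := ih (none, z) y hzQ rfl
              (fun e' he' => hu e' (List.mem_cons_of_mem e he')) hr
            simp only [embed, List.map_cons, runFrom, hsub, Option.bind_some]
            exact hrest
  -- the candidate recoverable set
  set R : Set X := {x | ∃ s σ t, σ ∈ Scv ∧
      embed s ∈ SRLang f x0 XS Scv Q ∧
      embed s ++ [Sum.inr σ] ∈ GRLang f x0 XS Scv ∧
      embed s ++ [Sum.inr σ] ++ embed t ∈ SRLang f x0 XS Scv Q ∧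
      runFrom f x0 (s ++ σ :: t) = some x} with hR
  have hRBad : R ⊆ (vulnStates f Scv ∪ XUS)ᶜ := by
    rintro x ⟨s, σ, t, hσ, hs, hga, ht, hx⟩
    exact ((hres.2 s hs σ hσ hga).2 t ht).1 t List.prefix_rfl x hx
  have hRrec : ∀ x ∈ R, ∃ r, IsRecoveryPath f Suc XR
      (vulnStates f Scv ∪ XUS) R x r := by
    rintro x ⟨s, σ, t, hσ, hs, hga, ht, hx⟩
    have hres2 := (hres.2 s hs σ hσ hga).2
    obtain ⟨_, u, q, hrunq, hq1, hq2⟩ := hres2 t ht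
    -- the continuation after the attack contains no attacked events
    have hupure : ∃ r : List E, u = embed r := by
      have key : ∀ (u' : List (E ⊕ E)) (c : List E),
          (runFrom gr (grInit x0) (embed s ++ [Sum.inr σ] ++ embed c ++ u')).isSome →
          ∃ r, u' = embed r := by
        intro u'
        induction u' with
        | nil => exact fun c _ => ⟨[], rfl⟩
        | cons a u' ih =>
            intro c hsome
            cases a with
            | inl e =>
                obtain ⟨r, hr⟩ := ih (c ++ [e]) (by
                  have hre : embed s ++ [Sum.inr σ] ++ embed (c ++ [e]) ++ u'
                      = embed s ++ [Sum.inr σ] ++ embed c ++ (Sum.inl e :: u') := by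
                    simp [embed]
                  rw [hre]
                  exact hsome)
                exact ⟨e :: r, by rw [hr]; rfl⟩
            | inr e =>
                exfalso
                obtain ⟨q', hq'⟩ := Option.isSome_iff_exists.mp hsome
                have hsplit : embed s ++ [Sum.inr σ] ++ embed c ++ (Sum.inr e :: u')
                    = (embed s ++ [Sum.inr σ] ++ embed c) ++ (Sum.inr e :: u') := by
                  simp
                rw [hsplit, runFrom_append] at hq'
                cases hp0 : runFrom gr (grInit x0) (embed s ++ [Sum.inr σ] ++ embed c) with
                | none => rw [hp0] at hq'; simp at hq'
                | some p0 =>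
                    rw [hp0] at hq'
                    simp only [Option.bind_some, runFrom] at hq'
                    cases hp1 : gr p0 (Sum.inr e) with
                    | none => rw [hp1] at hq'; simp at hq'
                    | some p1 =>
                        have hgstep := (subStep_eq_some.mp hp1).1
                        have hga1 := (grStep_eq_some.mp hgstep).2
                        obtain ⟨heScv, hfe⟩ := gaStep_inr_eq_some.mp hga1
                        have hcomp := comp s σ c p0 hp0
                        have hvuln : p0.2 ∈ vulnStates f Scv :=
                          ⟨e, heScv, by rw [hfe]; rfl⟩
                        have hmemc : embed s ++ [Sum.inr σ] ++ embed c
                            ∈ SRLang f x0 XS Scv Q :=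
                          memSR _ (by rw [hp0]; rfl)
                        exact (hres2 c hmemc).1 c List.prefix_rfl p0.2 hcomp.2.2
                          (Or.inl hvuln)
      exact key u t (by rw [hrunq]; rfl)
    obtain ⟨r, rfl⟩ := hupure
    have hfull : runFrom gr (grInit x0)
        (embed s ++ [Sum.inr σ] ++ embed (t ++ r)) = some q := by
      have : embed s ++ [Sum.inr σ] ++ embed (t ++ r)
          = embed s ++ [Sum.inr σ] ++ embed t ++ embed r := by simp [embed]
      rw [this]
      exact hrunq
    have hcompfull := comp s σ (t ++ r) q hfull
    have hx' : ∀ w : List E, runFrom f x0 (s ++ σ :: (t ++ w)) = runFrom f x w := by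
      intro w
      have hshape : s ++ σ :: (t ++ w) = (s ++ σ :: t) ++ w := by simp
      rw [hshape, runFrom_append, hx, Option.bind_some]
    -- common machinery for deviations
    have main : ∀ t', t' <+: r → ∀ u' : List E, (∀ e ∈ u', e ∈ Suc) →
        ∀ y, runFrom f x (t' ++ u') = some y →
        runFrom gr (grInit x0)
            (embed s ++ [Sum.inr σ] ++ embed ((t ++ t') ++ u')) = some (none, y) ∧
        runFrom f x0 (s ++ σ :: ((t ++ t') ++ u')) = some y := by
      intro t' hpre u' hu' y hy
      obtain ⟨m, hm⟩ := runFrom_prefix hy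
      have hmrest : runFrom f m u' = some y := by
        rw [runFrom_append, hm, Option.bind_some] at hy
        exact hy
      -- the prefix run in S^R
      obtain ⟨w2, hw2⟩ := hpre
      have hpref : ∃ p, runFrom gr (grInit x0)
          (embed s ++ [Sum.inr σ] ++ embed (t ++ t')) = some p := by
        have hshape : embed s ++ [Sum.inr σ] ++ embed (t ++ r)
            = (embed s ++ [Sum.inr σ] ++ embed (t ++ t')) ++ embed w2 := by
          rw [← hw2]; simp [embed]
        rw [hshape] at hfull
        exact runFrom_prefix hfull
      obtain ⟨p, hp⟩ := hpref
      have hc := comp s σ (t ++ t') p hp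
      have hpm : p.2 = m := by
        have h1 := hc.2.2
        rw [hx'] at h1
        rw [hm] at h1
        exact (Option.some.inj h1).symm
      have hext := ext u' p y hc.1 hc.2.1 hu' (by rw [hpm]; exact hmrest)
      constructor
      · have hshape2 : embed s ++ [Sum.inr σ] ++ embed ((t ++ t') ++ u')
            = (embed s ++ [Sum.inr σ] ++ embed (t ++ t')) ++ embed u' := by
          simp [embed]
        rw [hshape2, runFrom_append, hp, Option.bind_some]
        exact hext
      · have hshape3 : s ++ σ :: ((t ++ t') ++ u') = s ++ σ :: (t ++ (t' ++ u')) := by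
          simp
        rw [hshape3, hx']
        exact hy
    refine ⟨r, ?_, ?_, ?_, ?_⟩
    · refine ⟨q.2, hq2, ?_⟩
      have := hcompfull.2.2
      rw [hx'] at this
      exact this
    · intro t' hpre y hy
      have h2 := main t' hpre [] (by simp) y (by simpa using hy)
      have hmem : embed s ++ [Sum.inr σ] ++ embed ((t ++ t') ++ [])
          ∈ SRLang f x0 XS Scv Q := memSR _ (by rw [h2.1]; rfl)
      exact (hres2 _ hmem).1 _ List.prefix_rfl y h2.2
    · intro t' hpre u' hu' y hy
      have h2 := main t' hpre u' hu' y hy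
      have hmem : embed s ++ [Sum.inr σ] ++ embed ((t ++ t') ++ u')
          ∈ SRLang f x0 XS Scv Q := memSR _ (by rw [h2.1]; rfl)
      exact (hres2 _ hmem).1 _ List.prefix_rfl y h2.2
    · intro t' hpre e he y hy _
      have h2 := main t' hpre [e] (by simpa using he) y hy
      have hmem : embed s ++ [Sum.inr σ] ++ embed ((t ++ t') ++ [e])
          ∈ SRLang f x0 XS Scv Q := memSR _ (by rw [h2.1]; rfl)
      exact ⟨s, σ, (t ++ t') ++ [e], hσ, hs, hga, hmem, h2.2⟩
  -- every detection state lies in R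
  intro xd hxd
  refine Set.mem_sUnion.mpr ⟨R, ⟨hRBad, hRrec⟩, ?_⟩
  obtain ⟨w, ⟨s, σ, rfl, hσ, hwL, hsL, hgaL⟩, hrun⟩ := hxd
  have hsSR : embed s ∈ SRLang f x0 XS Scv Q := hres.1 s hsL
  have h1 := (hres.2 s hsSR σ hσ hgaL).1
  refine ⟨s, σ, [], hσ, hsSR, hgaL, ?_, ?_⟩
  · simpa [embed] using h1
  · simpa using hrun
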